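/- arXiv:2601.05761 — 4 statements merged into one kernel-verified Lean document; each statement's English description precedes it below -/
import Mathlib

section
/- Let K ∈ ℕ, let J be a graph, and let G be a graph. If G does not contain J as a K-fat minor, then the K-th power G^K does not contain J as a 3-fat minor. -/
open SimpleGraph

/-- A `K`-fat model `(𝒰, ℰ)` of a graph `J` in a graph `G`: pairwise disjoint connected
branch sets `U x` for the vertices `x` of `J`, and for each edge `xy` of `J` a branch
path `E x y` (recorded via its vertex set, realized by a path of `G` from `U x` to `U y`
meeting `U x` and `U y` only in its endvertices), such that branch paths avoid the branch
sets of non-incident vertices, distinct branch paths are internally disjoint, and any two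
distinct members of `𝒰 ∪ ℰ` have distance at least `K` in `G`, except for a branch path
and a branch set of one of the endvertices of the corresponding edge. -/
structure FatModel {α β : Type*} (J : SimpleGraph α) (G : SimpleGraph β) (K : ℕ) where
  U : α → Set β
  conn : ∀ x, (G.induce (U x)).Connected
  disj : ∀ x y, x ≠ y → Disjoint (U x) (U y)
  E : α → α → Set β
  Esymm : ∀ x y, E x y = E y x
  path : ∀ ⦃x y⦄, J.Adj x y →
    ∃ (a b : β) (p : G.Walk a b), p.IsPath ∧ a ∈ U x ∧ b ∈ U y ∧
      E x y = {v | v ∈ p.support} ∧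
      (∀ v ∈ p.support, v ∈ U x → v = a) ∧
      (∀ v ∈ p.support, v ∈ U y → v = b)
  path_disj : ∀ ⦃x y⦄, J.Adj x y → ∀ z, z ≠ x → z ≠ y → Disjoint (E x y) (U z)
  paths_int_disj : ∀ ⦃x y x' y'⦄, J.Adj x y → J.Adj x' y' → s(x, y) ≠ s(x', y') →
    ∀ v, v ∈ E x y → v ∈ E x' y' → v ∈ (U x ∪ U y) ∩ (U x' ∪ U y')
  fat_UU : ∀ x y, x ≠ y → ∀ u ∈ U x, ∀ w ∈ U y, K ≤ G.dist u w
  fat_UE : ∀ ⦃x y⦄, J.Adj x y → ∀ z, z ≠ x → z ≠ y → ∀ u ∈ E x y, ∀ w ∈ U z, K ≤ G.dist u w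
  fat_EE : ∀ ⦃x y x' y'⦄, J.Adj x y → J.Adj x' y' → s(x, y) ≠ s(x', y') →
    ∀ u ∈ E x y, ∀ w ∈ E x' y', K ≤ G.dist u w

/-- `J` is a `K`-fat minor of `G` if `G` contains a `K`-fat model of `J`. -/
def IsFatMinor {α β : Type*} (G : SimpleGraph β) (J : SimpleGraph α) (K : ℕ) : Prop :=
  Nonempty (FatModel J G K)

/-- The `K`-th power `G^K` of a graph `G`: an edge between any two distinct vertices at
distance at most `K` in `G`. -/
def power {α : Type*} (G : SimpleGraph α) (K : ℕ) : SimpleGraph α where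
  Adj x y := x ≠ y ∧ G.Reachable x y ∧ G.dist x y ≤ K
  symm := by
    constructor
    rintro x y ⟨h1, h2, h3⟩
    exact ⟨h1.symm, h2.symm, by rwa [SimpleGraph.dist_comm]⟩
  loopless := by
    constructor
    rintro x ⟨h, -⟩
    exact h rfl

section Helpers

variable {β : Type*} {G : SimpleGraph β} {K : ℕ}

private lemma dist_triangle' {u v w : β} (h1 : G.Reachable u v) (h2 : G.Reachable v w) :
    G.dist u w ≤ G.dist u v + G.dist v w := by
  obtain ⟨p, hp⟩ := h1.exists_walk_length_eq_dist
  obtain ⟨q, hq⟩ := h2.exists_walk_length_eq_dist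
  calc G.dist u w ≤ (p.append q).length := SimpleGraph.dist_le _
    _ = _ := by rw [SimpleGraph.Walk.length_append, hp, hq]

private lemma mem_support_bounds {u v w : β} (p : G.Walk u v) (hw : w ∈ p.support) :
    G.Reachable u w ∧ G.Reachable w v ∧ G.dist u w + G.dist w v ≤ p.length := by
  classical
  refine ⟨⟨p.takeUntil w hw⟩, ⟨p.dropUntil w hw⟩, ?_⟩
  have h := congrArg SimpleGraph.Walk.length (p.take_spec hw)
  rw [SimpleGraph.Walk.length_append] at h
  have h1 := SimpleGraph.dist_le (p.takeUntil w hw)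
  have h2 := SimpleGraph.dist_le (p.dropUntil w hw)
  omega

private lemma exists_mid : ∀ {u w : β} (p : G.Walk u w) (i : ℕ),
    ∃ m : β, G.Reachable u m ∧ G.Reachable m w ∧ G.dist u m ≤ i ∧
      G.dist m w ≤ p.length - i := by
  intro u w p
  induction p with
  | nil =>
    exact fun i => ⟨_, Reachable.refl _, Reachable.refl _,
      by simp [SimpleGraph.dist_self], by simp [SimpleGraph.dist_self]⟩
  | @cons u u₁ w h q ih =>
    intro i
    cases i with
    | zero =>
      refine ⟨u, Reachable.refl u, ⟨SimpleGraph.Walk.cons h q⟩, by simp, ?_⟩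
      simpa using SimpleGraph.dist_le (SimpleGraph.Walk.cons h q)
    | succ i =>
      obtain ⟨m, r1, r2, d1, d2⟩ := ih i
      refine ⟨m, h.reachable.trans r1, r2, ?_, ?_⟩
      · have := dist_triangle' h.reachable r1
        have h1 : G.dist u u₁ ≤ 1 := by
          simpa using SimpleGraph.dist_le (SimpleGraph.Walk.cons h SimpleGraph.Walk.nil)
        omega
      · simp only [SimpleGraph.Walk.length_cons]
        omega

private lemma power_reachable {u w : β} (h : (power G K).Reachable u w) : G.Reachable u w := by
  obtain ⟨p⟩ := h
  induction p with
  | nil => exact Reachable.refl _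
  | cons h q ih => exact (h.2.1).trans ih

private lemma power_dist_three {u w : β} (h3 : 3 ≤ (power G K).dist u w) :
    2 * K + 1 ≤ G.dist u w := by
  have hpr : (power G K).Reachable u w := Reachable.of_dist_ne_zero (by omega)
  have hr : G.Reachable u w := power_reachable hpr
  by_contra hlt
  push_neg at hlt
  obtain ⟨p, hp⟩ := hr.exists_walk_length_eq_dist
  obtain ⟨m, r1, r2, d1, d2⟩ := exists_mid p (min K p.length)
  have hd1 : G.dist u m ≤ K := le_trans d1 (min_le_left _ _)
  have hd2 : G.dist m w ≤ K := by
    rcases le_total K p.length with hc | hc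
    · rw [min_eq_left hc] at d2; omega
    · rw [min_eq_right hc] at d2; omega
  have pd1 : (power G K).dist u m ≤ 1 := by
    by_cases hum : u = m
    · subst hum; simp [SimpleGraph.dist_self]
    · have hadj : (power G K).Adj u m := ⟨hum, r1, hd1⟩
      simpa using SimpleGraph.dist_le (SimpleGraph.Walk.cons hadj SimpleGraph.Walk.nil)
  have pd2 : (power G K).dist m w ≤ 1 := by
    by_cases hmw : m = w
    · subst hmw; simp [SimpleGraph.dist_self]
    · have hadj : (power G K).Adj m w := ⟨hmw, r2, hd2⟩
      simpa using SimpleGraph.dist_le (SimpleGraph.Walk.cons hadj SimpleGraph.Walk.nil)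
  have pr1 : (power G K).Reachable u m := by
    by_cases hum : u = m
    · subst hum; exact Reachable.refl _
    · exact SimpleGraph.Adj.reachable ⟨hum, r1, hd1⟩
  have pr2 : (power G K).Reachable m w := by
    by_cases hmw : m = w
    · subst hmw; exact Reachable.refl _
    · exact SimpleGraph.Adj.reachable ⟨hmw, r2, hd2⟩
  have := dist_triangle' pr1 pr2
  omega


def fill (G : SimpleGraph β) (K : ℕ) (S : Set β) : Set β :=
  {v | ∃ u ∈ S, ∃ w ∈ S, G.Reachable u v ∧ G.Reachable v w ∧ G.dist u v + G.dist v w ≤ K}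

private lemma subset_fill {S : Set β} : S ⊆ fill G K S := by
  intro v hv
  exact ⟨v, hv, v, hv, Reachable.refl _, Reachable.refl _, by simp [SimpleGraph.dist_self]⟩

private lemma fill_near {S : Set β} {v : β} (hv : v ∈ fill G K S) :
    ∃ u ∈ S, G.Reachable v u ∧ 2 * G.dist v u ≤ K := by
  obtain ⟨u, hu, w, hw, r1, r2, hsum⟩ := hv
  by_cases hc : 2 * G.dist u v ≤ K
  · exact ⟨u, hu, r1.symm, by rwa [SimpleGraph.dist_comm]⟩
  · exact ⟨w, hw, r2, by omega⟩

private lemma walk_support_fill {S : Set β} {u w : β} (hu : u ∈ S) (hw : w ∈ S)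
    (p : G.Walk u w) (hlen : p.length ≤ K) : ∀ v ∈ p.support, v ∈ fill G K S := by
  intro v hv
  obtain ⟨r1, r2, hb⟩ := mem_support_bounds p hv
  exact ⟨u, hu, w, hw, r1, r2, by omega⟩

private lemma near_far {S T : Set β} {v w' : β}
    (hST : ∀ u ∈ S, ∀ w ∈ T, 2 * K + 1 ≤ G.dist u w)
    (hv : ∃ u ∈ S, G.Reachable v u ∧ 2 * G.dist v u ≤ K)
    (hw : ∃ u ∈ T, G.Reachable w' u ∧ 2 * G.dist w' u ≤ K) :
    K + 1 ≤ G.dist v w' := by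
  obtain ⟨u, hu, rvu, dvu⟩ := hv
  obtain ⟨w, hw, rww, dww⟩ := hw
  have h1 : 2 * K + 1 ≤ G.dist u w := hST u hu w hw
  have ruw : G.Reachable u w := Reachable.of_dist_ne_zero (by omega)
  have rvw' : G.Reachable v w' := (rvu.trans ruw).trans rww.symm
  have t1 : G.dist u w ≤ G.dist u v + G.dist v w := dist_triangle' rvu.symm (rvw'.trans rww)
  have t2 : G.dist v w ≤ G.dist v w' + G.dist w' w := dist_triangle' rvw' rww
  have c1 : G.dist u v = G.dist v u := SimpleGraph.dist_comm
  have c2 : G.dist w' w = G.dist w w' := SimpleGraph.dist_comm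
  omega

private lemma trim {S T : Set β} : ∀ (n : ℕ) {a b : β} (q : G.Walk a b), q.length ≤ n →
    a ∈ S → b ∈ T →
    ∃ (a' b' : β) (p : G.Walk a' b'), p.IsPath ∧ a' ∈ S ∧ b' ∈ T ∧
      (∀ v ∈ p.support, v ∈ S → v = a') ∧ (∀ v ∈ p.support, v ∈ T → v = b') ∧
      (∀ v ∈ p.support, v ∈ q.support) := by
  intro n
  induction n using Nat.strong_induction_on with
  | _ n ih =>
  intro a b q hq ha hb
  classical
  by_cases hS : ∃ v ∈ q.bypass.support, v ∈ S ∧ v ≠ a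
  · obtain ⟨v, hv, hvS, hva⟩ := hS
    have hsplit := congrArg SimpleGraph.Walk.length (q.bypass.take_spec hv)
    rw [SimpleGraph.Walk.length_append] at hsplit
    have h1 : 1 ≤ (q.bypass.takeUntil v hv).length := by
      rcases Nat.eq_zero_or_pos (q.bypass.takeUntil v hv).length with h0 | h0
      · exact absurd (SimpleGraph.Walk.eq_of_length_eq_zero h0).symm hva
      · exact h0
    have hbyp := SimpleGraph.Walk.length_bypass_le q
    have hlen : (q.bypass.dropUntil v hv).length < n := by omega
    obtain ⟨a', b', p, hp, ha', hb', hSu, hTu, hsub⟩ :=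
      ih _ hlen (q.bypass.dropUntil v hv) le_rfl hvS hb
    exact ⟨a', b', p, hp, ha', hb', hSu, hTu, fun t ht =>
      q.support_bypass_subset (q.bypass.support_dropUntil_subset hv (hsub t ht))⟩
  · by_cases hT : ∃ v ∈ q.bypass.support, v ∈ T ∧ v ≠ b
    · obtain ⟨v, hv, hvT, hvb⟩ := hT
      have hsplit := congrArg SimpleGraph.Walk.length (q.bypass.take_spec hv)
      rw [SimpleGraph.Walk.length_append] at hsplit
      have h1 : 1 ≤ (q.bypass.dropUntil v hv).length := by
        rcases Nat.eq_zero_or_pos (q.bypass.dropUntil v hv).length with h0 | h0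
        · exact absurd (SimpleGraph.Walk.eq_of_length_eq_zero h0) hvb
        · exact h0
      have hbyp := SimpleGraph.Walk.length_bypass_le q
      have hlen : (q.bypass.takeUntil v hv).length < n := by omega
      obtain ⟨a', b', p, hp, ha', hb', hSu, hTu, hsub⟩ :=
        ih _ hlen (q.bypass.takeUntil v hv) le_rfl ha hvT
      exact ⟨a', b', p, hp, ha', hb', hSu, hTu, fun t ht =>
        q.support_bypass_subset (q.bypass.support_takeUntil_subset hv (hsub t ht))⟩
    · push_neg at hS hT
      exact ⟨a, b, q.bypass, q.bypass_isPath, ha, hb,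
        fun v hv hvS => by by_contra hne; exact hne (hS v hv hvS),
        fun v hv hvT => by by_contra hne; exact hne (hT v hv hvT),
        fun v hv => q.support_bypass_subset hv⟩

private lemma reachable_induce {S : Set β} : ∀ {u v : β} (p : G.Walk u v),
    (∀ x ∈ p.support, x ∈ S) → ∀ (hu : u ∈ S) (hv : v ∈ S),
    (G.induce S).Reachable ⟨u, hu⟩ ⟨v, hv⟩ := by
  intro u v p
  induction p with
  | nil => intro _ hu hv; exact Reachable.refl _
  | @cons u u₁ v h q ih =>
    intro hsup hu hv
    have hu1 : u₁ ∈ S := hsup _ (by simp)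
    have hadj : (G.induce S).Adj ⟨u, hu⟩ ⟨u₁, hu1⟩ := h
    exact hadj.reachable.trans (ih (fun x hx => hsup x (by simp [hx])) hu1 hv)

private lemma power_walk_near : ∀ {a b : β} (p : (power G K).Walk a b),
    ∃ q : G.Walk a b, ∀ v ∈ q.support, ∃ t ∈ p.support,
      G.Reachable v t ∧ 2 * G.dist v t ≤ K := by
  intro a b p
  induction p with
  | nil =>
    refine ⟨SimpleGraph.Walk.nil, ?_⟩
    intro v hv
    simp only [SimpleGraph.Walk.support_nil, List.mem_singleton] at hv
    subst hv
    exact ⟨v, by simp, Reachable.refl _, by simp [SimpleGraph.dist_self]⟩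
  | @cons a a₁ b h p ih =>
    obtain ⟨q', hq'⟩ := ih
    obtain ⟨g, hg⟩ := (h.2.1).exists_walk_length_eq_dist
    refine ⟨g.append q', ?_⟩
    intro v hv
    rw [SimpleGraph.Walk.mem_support_append_iff] at hv
    rcases hv with hv | hv
    · obtain ⟨r1, r2, hb⟩ := mem_support_bounds g hv
      rw [hg] at hb
      have hdk : G.dist a a₁ ≤ K := h.2.2
      by_cases hc : 2 * G.dist a v ≤ K
      · exact ⟨a, by simp, r1.symm, by rwa [SimpleGraph.dist_comm]⟩
      · refine ⟨a₁, ?_, r2, by omega⟩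
        simp [SimpleGraph.Walk.support_cons, p.start_mem_support]
    · obtain ⟨t, ht, hr⟩ := hq' v hv
      exact ⟨t, by simp [SimpleGraph.Walk.support_cons, ht], hr⟩

private lemma fill_connected {S : Set β}
    (hconn : ((power G K).induce S).Connected) : (G.induce (fill G K S)).Connected := by
  classical
  obtain ⟨⟨b, hbS⟩⟩ := hconn.nonempty
  have claimA : ∀ (s t : {v // v ∈ S}) (W : ((power G K).induce S).Walk s t),
      ∃ q : G.Walk s.val t.val, ∀ v ∈ q.support, v ∈ fill G K S := by
    intro s t W
    induction W with
    | nil =>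
      rename_i s'
      refine ⟨SimpleGraph.Walk.nil, ?_⟩
      intro v hv
      simp only [SimpleGraph.Walk.support_nil, List.mem_singleton] at hv
      subst hv
      exact subset_fill s'.2
    | @cons s s₁ t hadj W ih =>
      obtain ⟨q', hq'⟩ := ih
      have h' : (power G K).Adj s.val s₁.val := hadj
      obtain ⟨g, hg⟩ := (h'.2.1).exists_walk_length_eq_dist
      refine ⟨g.append q', ?_⟩
      intro v hv
      rw [SimpleGraph.Walk.mem_support_append_iff] at hv
      rcases hv with hv | hv
      · exact walk_support_fill s.2 s₁.2 g (by rw [hg]; exact h'.2.2) v hv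
      · exact hq' v hv
  have claimB : ∀ v ∈ fill G K S, ∃ u, ∃ (hu : u ∈ S), ∃ q : G.Walk u v,
      ∀ t ∈ q.support, t ∈ fill G K S := by
    rintro v ⟨u, hu, w, hw, ruv, rvw, hsum⟩
    obtain ⟨g, hg⟩ := ruv.exists_walk_length_eq_dist
    refine ⟨u, hu, g, ?_⟩
    intro t ht
    obtain ⟨r1, r2, hb⟩ := mem_support_bounds g ht
    rw [hg] at hb
    have htri : G.dist t w ≤ G.dist t v + G.dist v w := dist_triangle' r2 rvw
    exact ⟨u, hu, w, hw, r1, r2.trans rvw, by omega⟩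
  haveI : Nonempty ↑(fill G K S) := ⟨⟨b, subset_fill hbS⟩⟩
  refine ⟨?_⟩
  intro v w
  obtain ⟨v, hv⟩ := v
  obtain ⟨w, hw⟩ := w
  obtain ⟨u₁, hu₁, q₁, hq₁⟩ := claimB v hv
  obtain ⟨u₂, hu₂, q₂, hq₂⟩ := claimB w hw
  obtain ⟨W⟩ := hconn.preconnected ⟨u₁, hu₁⟩ ⟨u₂, hu₂⟩
  obtain ⟨qA, hqA⟩ := claimA ⟨u₁, hu₁⟩ ⟨u₂, hu₂⟩ W
  refine reachable_induce ((q₁.reverse.append qA).append q₂) ?_ hv hw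
  intro x hx
  rw [SimpleGraph.Walk.mem_support_append_iff] at hx
  rcases hx with hx | hx
  · rw [SimpleGraph.Walk.mem_support_append_iff] at hx
    rcases hx with hx | hx
    · rw [SimpleGraph.Walk.support_reverse, List.mem_reverse] at hx
      exact hq₁ x hx
    · exact hqA x hx
  · exact hq₂ x hx

end Helpers

section Construction

variable {α β : Type*} {J : SimpleGraph α} {G : SimpleGraph β} {K : ℕ}

private def Q (J : SimpleGraph α) (G : SimpleGraph β) (K : ℕ)
    (M : FatModel J (power G K) 3) (s : Sym2 α) (S : Set β) : Prop :=
  ∃ (x y : α) (a b : β) (p : G.Walk a b), s = s(x, y) ∧ J.Adj x y ∧ p.IsPath ∧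
    a ∈ fill G K (M.U x) ∧ b ∈ fill G K (M.U y) ∧ S = {v | v ∈ p.support} ∧
    (∀ v ∈ p.support, v ∈ fill G K (M.U x) → v = a) ∧
    (∀ v ∈ p.support, v ∈ fill G K (M.U y) → v = b) ∧
    (∀ v ∈ p.support, ∃ t ∈ M.E x y, G.Reachable v t ∧ 2 * G.dist v t ≤ K)

open Classical in
private noncomputable def Efun (M : FatModel J (power G K) 3) (s : Sym2 α) : Set β :=
  if h : ∃ S, Q J G K M s S then h.choose else ∅

private lemma Efun_spec {M : FatModel J (power G K) 3} {s : Sym2 α}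
    (h : ∃ S, Q J G K M s S) : Q J G K M s (Efun M s) := by
  classical
  rw [Efun, dif_pos h]
  exact h.choose_spec

private lemma Q_exists (M : FatModel J (power G K) 3) {x y : α} (hxy : J.Adj x y) :
    ∃ S, Q J G K M s(x, y) S := by
  obtain ⟨a, b, p, hp, haU, hbU, hE, hUa, hUb⟩ := M.path hxy
  obtain ⟨q, hq⟩ := power_walk_near p
  obtain ⟨a', b', p', hp', ha', hb', hSu, hTu, hsub⟩ :=
    trim (S := fill G K (M.U x)) (T := fill G K (M.U y)) q.length q le_rfl
      (subset_fill haU) (subset_fill hbU)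
  refine ⟨_, x, y, a', b', p', rfl, hxy, hp', ha', hb', rfl, hSu, hTu, ?_⟩
  intro v hv
  obtain ⟨t, ht, h1, h2⟩ := hq v (hsub v hv)
  exact ⟨t, by rw [hE]; exact ht, h1, h2⟩

private lemma Efun_near {M : FatModel J (power G K) 3} {x y : α} (hxy : J.Adj x y) :
    ∀ v ∈ Efun M s(x, y), ∃ t ∈ M.E x y, G.Reachable v t ∧ 2 * G.dist v t ≤ K := by
  obtain ⟨x₀, y₀, a, b, p, hs, hadj, _, _, _, hSet, _, _, hnear⟩ := Efun_spec (Q_exists M hxy)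
  intro v hv
  rw [hSet] at hv
  obtain ⟨t, ht, hr⟩ := hnear v hv
  rcases Sym2.eq_iff.mp hs with ⟨h1, h2⟩ | ⟨h1, h2⟩
  · subst h1; subst h2; exact ⟨t, ht, hr⟩
  · subst h1; subst h2; exact ⟨t, by rw [M.Esymm]; exact ht, hr⟩

end Construction

/-- If `G` has no `K`-fat `J` minor, then the `K`-th power `G^K` has no `3`-fat `J`
minor. -/
theorem stmt6 {α β : Type*} (J : SimpleGraph α) (G : SimpleGraph β) (K : ℕ) (hK : 1 ≤ K)
    (h : ¬ IsFatMinor G J K) : ¬ IsFatMinor (power G K) J 3 := by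
  rintro ⟨M⟩
  apply h
  have fUU : ∀ x y, x ≠ y → ∀ u ∈ M.U x, ∀ w ∈ M.U y, 2 * K + 1 ≤ G.dist u w :=
    fun x y hxy u hu w hw => power_dist_three (M.fat_UU x y hxy u hu w hw)
  have fUE : ∀ ⦃x y⦄, J.Adj x y → ∀ z, z ≠ x → z ≠ y →
      ∀ u ∈ M.E x y, ∀ w ∈ M.U z, 2 * K + 1 ≤ G.dist u w :=
    fun x y hxy z hzx hzy u hu w hw => power_dist_three (M.fat_UE hxy z hzx hzy u hu w hw)
  have fEE : ∀ ⦃x y x' y'⦄, J.Adj x y → J.Adj x' y' → s(x, y) ≠ s(x', y') →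
      ∀ u ∈ M.E x y, ∀ w ∈ M.E x' y', 2 * K + 1 ≤ G.dist u w :=
    fun x y x' y' hxy hxy' hne u hu w hw =>
      power_dist_three (M.fat_EE hxy hxy' hne u hu w hw)
  refine ⟨⟨fun x => fill G K (M.U x), fun x => fill_connected (M.conn x), ?_,
    fun x y => Efun M s(x, y), fun x y => congrArg (Efun M) (Sym2.eq_swap), ?_, ?_, ?_, ?_, ?_, ?_⟩⟩
  · -- disj
    intro x y hxy
    rw [Set.disjoint_left]
    intro v hvx hvy
    have := near_far (fUU x y hxy) (fill_near hvx) (fill_near hvy)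
    simp [SimpleGraph.dist_self] at this
  · -- path
    intro x y hxy
    obtain ⟨x₀, y₀, a, b, p, hs, hadj, hp, ha, hb, hSet, hUa, hUb, _⟩ :=
      Efun_spec (Q_exists M hxy)
    rcases Sym2.eq_iff.mp hs with ⟨h1, h2⟩ | ⟨h1, h2⟩
    · subst h1; subst h2
      exact ⟨a, b, p, hp, ha, hb, hSet, hUa, hUb⟩
    · subst h1; subst h2
      refine ⟨b, a, p.reverse, hp.reverse, hb, ha, ?_, ?_, ?_⟩
      · show Efun M s(x, y) = _
        rw [hSet]
        ext v
        simp [SimpleGraph.Walk.support_reverse]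
      · intro v hv hvU
        rw [SimpleGraph.Walk.support_reverse, List.mem_reverse] at hv
        exact hUb v hv hvU
      · intro v hv hvU
        rw [SimpleGraph.Walk.support_reverse, List.mem_reverse] at hv
        exact hUa v hv hvU
  · -- path_disj
    intro x y hxy z hzx hzy
    rw [Set.disjoint_left]
    intro v hvE hvU
    have := near_far (fUE hxy z hzx hzy) (Efun_near hxy v hvE) (fill_near hvU)
    simp [SimpleGraph.dist_self] at this
  · -- paths_int_disj
    intro x y x' y' hxy hxy' hne v hv hv'
    exfalso
    have := near_far (fEE hxy hxy' hne) (Efun_near hxy v hv) (Efun_near hxy' v hv')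
    simp [SimpleGraph.dist_self] at this
  · -- fat_UU
    intro x y hxy u hu w hw
    have := near_far (fUU x y hxy) (fill_near hu) (fill_near hw)
    omega
  · -- fat_UE
    intro x y hxy z hzx hzy u hu w hw
    have := near_far (fUE hxy z hzx hzy) (Efun_near hxy u hu) (fill_near hw)
    omega
  · -- fat_EE
    intro x y x' y' hxy hxy' hne u hu w hw
    have := near_far (fEE hxy hxy' hne) (Efun_near hxy u hu) (Efun_near hxy' w hw)
    omega
end

section
/- Let M ≥ 1, A ≥ 0, and let φ be an (M,A)-quasi-isometry from a graph G to a graph H, and set r := M(M(3A+1) + 2M⁻¹A + 1). If X ⊆ V(G) separates sets Y,Z ⊆ V(G) in G (i.e., every Y–Z path in G meets X), then the ball B_H(φ(X), r) separates φ(Y) and φ(Z) in H. -/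
open SimpleGraph

/-- An `(M,A)`-quasi-isometry from a graph `G` to a graph `H`. -/
def IsQuasiIsometry {α β : Type*} (M A : ℝ) (G : SimpleGraph α) (H : SimpleGraph β)
    (φ : α → β) : Prop :=
  (∀ x y : α,
      M⁻¹ * (G.dist x y : ℝ) - A ≤ (H.dist (φ x) (φ y) : ℝ) ∧
      (H.dist (φ x) (φ y) : ℝ) ≤ M * (G.dist x y : ℝ) + A) ∧
  ∀ v : β, ∃ x : α, (H.dist v (φ x) : ℝ) ≤ A

/-- `X` separates `Y` and `Z` in `G`: every walk in `G` from a vertex of `Y` to a vertex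
of `Z` meets `X`. -/
def Separates {α : Type*} (G : SimpleGraph α) (X Y Z : Set α) : Prop :=
  ∀ ⦃y z : α⦄, y ∈ Y → z ∈ Z → ∀ p : G.Walk y z, ∃ v ∈ p.support, v ∈ X

/-- Bridge lemma: if `b` and `b'` are at distance at most 1 in `H` and `xb`, `xb'` are
`A`-close preimages, then there is a walk in `G` from `xb` to `xb'` all of whose vertices
map `r`-close to `b`. -/
lemma bridge {α β : Type*} (G : SimpleGraph α) (H : SimpleGraph β) (M A : ℝ)
    (hM : 1 ≤ M) (hA : 0 ≤ A) (hG : G.Connected) (hH : H.Connected)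
    (φ : α → β) (hφ : IsQuasiIsometry M A G H φ)
    (b b' : β) (xb xb' : α) (hbb' : (H.dist b b' : ℝ) ≤ 1)
    (h1 : (H.dist b (φ xb) : ℝ) ≤ A) (h2 : (H.dist b' (φ xb') : ℝ) ≤ A) :
    ∃ W : G.Walk xb xb', ∀ u ∈ W.support,
      (H.dist b (φ u) : ℝ) ≤ M * (M * (3 * A + 1) + 2 * M⁻¹ * A + 1) := by
  classical
  have hM0 : (0:ℝ) < M := lt_of_lt_of_le one_pos hM
  have hMinv : M⁻¹ * M = 1 := inv_mul_cancel₀ (ne_of_gt hM0)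
  -- distance between φ xb and φ xb' in H
  have htri : (H.dist (φ xb) (φ xb') : ℝ) ≤ 2 * A + 1 := by
    have t1 : H.dist (φ xb) (φ xb') ≤ H.dist (φ xb) b + H.dist b (φ xb') :=
      hH.dist_triangle
    have t2 : H.dist b (φ xb') ≤ H.dist b b' + H.dist b' (φ xb') := hH.dist_triangle
    have e1 : H.dist (φ xb) b = H.dist b (φ xb) := SimpleGraph.dist_comm
    have := (Nat.cast_le (α := ℝ)).mpr (le_trans t1 (Nat.add_le_add_left t2 _))
    push_cast at this
    rw [e1] at this
    linarith
  -- distance in G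
  have hGd : (G.dist xb xb' : ℝ) ≤ M * (3 * A + 1) := by
    have := (hφ.1 xb xb').1
    have h' : M⁻¹ * (G.dist xb xb' : ℝ) ≤ 3 * A + 1 := by linarith
    calc (G.dist xb xb' : ℝ) = M * (M⁻¹ * (G.dist xb xb' : ℝ)) := by
          field_simp
      _ ≤ M * (3 * A + 1) := by
          exact mul_le_mul_of_nonneg_left h' (le_of_lt hM0)
  obtain ⟨W, hW⟩ := hG.exists_walk_length_eq_dist xb xb'
  refine ⟨W, fun u hu => ?_⟩
  -- G.dist xb u ≤ G.dist xb xb'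
  have hdu : (G.dist xb u : ℝ) ≤ M * (3 * A + 1) := by
    have h1' : G.dist xb u ≤ (W.takeUntil u hu).length := SimpleGraph.dist_le _
    have h2' : (W.takeUntil u hu).length ≤ W.length := W.length_takeUntil_le hu
    have : (G.dist xb u : ℝ) ≤ (G.dist xb xb' : ℝ) := by
      exact_mod_cast le_trans h1' (hW ▸ h2')
    linarith
  have hHu : (H.dist (φ xb) (φ u) : ℝ) ≤ M * (M * (3 * A + 1)) + A := by
    have := (hφ.1 xb u).2
    nlinarith
  have htri2 : (H.dist b (φ u) : ℝ) ≤ (H.dist b (φ xb) : ℝ) + (H.dist (φ xb) (φ u) : ℝ) := by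
    exact_mod_cast (Nat.cast_le (α := ℝ)).mpr (hH.dist_triangle (v := φ xb))
  have hinvA : 0 ≤ M⁻¹ * A := mul_nonneg (le_of_lt (inv_pos.mpr hM0)) hA
  have : (H.dist b (φ u) : ℝ) ≤ M * (M * (3 * A + 1)) + 2 * A := by linarith
  nlinarith

/-- Main inductive lemma. -/
lemma mainlem {α β : Type*} (G : SimpleGraph α) (H : SimpleGraph β) (M A : ℝ)
    (hM : 1 ≤ M) (hA : 0 ≤ A) (hG : G.Connected) (hH : H.Connected)
    (φ : α → β) (hφ : IsQuasiIsometry M A G H φ) :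
    ∀ {b c : β} (q : H.Walk b c) (xb xc : α),
      (H.dist b (φ xb) : ℝ) ≤ A → (H.dist c (φ xc) : ℝ) ≤ A →
      ∃ W : G.Walk xb xc, ∀ u ∈ W.support, ∃ v ∈ q.support,
        (H.dist v (φ u) : ℝ) ≤ M * (M * (3 * A + 1) + 2 * M⁻¹ * A + 1) := by
  intro b c q
  induction q with
  | @nil b =>
    intro xb xc h1 h2
    obtain ⟨W, hW⟩ := bridge G H M A hM hA hG hH φ hφ b b xb xc
      (by simp [SimpleGraph.dist_self]) h1 h2
    exact ⟨W, fun u hu => ⟨b, by simp, hW u hu⟩⟩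
  | @cons b b' c hadj q' ih =>
    intro xb xc h1 h2
    obtain ⟨xb', hxb'⟩ := hφ.2 b'
    have hbb' : (H.dist b b' : ℝ) ≤ 1 := by
      have : H.dist b b' ≤ 1 := by
        have : H.dist b b' ≤ (hadj.toWalk).length := SimpleGraph.dist_le _
        simpa using this
      exact_mod_cast this
    obtain ⟨W1, hW1⟩ := bridge G H M A hM hA hG hH φ hφ b b' xb xb' hbb' h1 hxb'
    obtain ⟨W2, hW2⟩ := ih xb' xc hxb' h2
    refine ⟨W1.append W2, fun u hu => ?_⟩
    rcases (SimpleGraph.Walk.mem_support_append_iff _ _).mp hu with hu1 | hu2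
    · exact ⟨b, by simp, hW1 u hu1⟩
    · obtain ⟨v, hv, hvd⟩ := hW2 u hu2
      exact ⟨v, by simp [SimpleGraph.Walk.support_cons]; right; exact hv, hvd⟩

/-- Quasi-isometries coarsely preserve separators: if `φ` is an `(M,A)`-quasi-isometry
from `G` to `H` and `X` separates `Y` and `Z` in `G`, then the ball of radius
`r = M(M(3A+1) + 2M⁻¹A + 1)` around `φ(X)` in `H` separates `φ(Y)` and `φ(Z)` in `H`. -/
theorem stmt13 {α β : Type*} (G : SimpleGraph α) (H : SimpleGraph β) (M A : ℝ)
    (hM : 1 ≤ M) (hA : 0 ≤ A) (hG : G.Connected) (hH : H.Connected)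
    (φ : α → β) (hφ : IsQuasiIsometry M A G H φ)
    (X Y Z : Set α) (hsep : Separates G X Y Z) :
    Separates H
      {v : β | ∃ u ∈ X, ∃ p : H.Walk (φ u) v,
        (p.length : ℝ) ≤ M * (M * (3 * A + 1) + 2 * M⁻¹ * A + 1)}
      (φ '' Y) (φ '' Z) := by
  rintro _ _ ⟨y, hy, rfl⟩ ⟨z, hz, rfl⟩ q
  obtain ⟨W, hW⟩ := mainlem G H M A hM hA hG hH φ hφ q y z
    (by simp [SimpleGraph.dist_self]; positivity)
    (by simp [SimpleGraph.dist_self]; positivity)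
  obtain ⟨u, hu, huX⟩ := hsep hy hz W
  obtain ⟨v, hv, hvd⟩ := hW u hu
  refine ⟨v, hv, u, huX, ?_⟩
  obtain ⟨p, hp⟩ := hH.exists_walk_length_eq_dist (φ u) v
  refine ⟨p, ?_⟩
  rw [hp]
  have : (H.dist (φ u) v : ℝ) = (H.dist v (φ u) : ℝ) := by
    rw [SimpleGraph.dist_comm]
  linarith
end

section
/- Let G be a connected graph, Z a nonempty set of vertices of G, and suppose every vertex of G is at distance at most B from Z. Then there exists a spanning forest F of G such that each component of F contains exactly one vertex of Z, and each component of F has radius at most B in G (every vertex of a component is within distance B in G of its root in Z). -/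
open SimpleGraph

namespace Stmt15Aux

attribute [local instance] Classical.propDecidable

variable {α : Type*} (G : SimpleGraph α) (Z : Set α)

noncomputable def dd (v : α) : ℕ := sInf (G.dist v '' Z)

lemma dd_le {z : α} (hz : z ∈ Z) (v : α) : dd G Z v ≤ G.dist v z :=
  Nat.sInf_le ⟨z, hz, rfl⟩

lemma dd_exists (hZ : Z.Nonempty) (v : α) : ∃ z ∈ Z, G.dist v z = dd G Z v := by
  have : (G.dist v '' Z).Nonempty := hZ.image _
  obtain ⟨z, hz, hd⟩ := Nat.sInf_mem this
  exact ⟨z, hz, hd⟩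

lemma dd_zero_of_mem {z : α} (hz : z ∈ Z) : dd G Z z = 0 :=
  Nat.le_antisymm (by simpa [SimpleGraph.dist_self] using dd_le G Z hz z) (Nat.zero_le _)

noncomputable def par (v : α) : α :=
  if h : ∃ u, G.Adj v u ∧ dd G Z u < dd G Z v then h.choose else v

lemma par_spec {v : α} (h : ∃ u, G.Adj v u ∧ dd G Z u < dd G Z v) :
    G.Adj v (par G Z v) ∧ dd G Z (par G Z v) < dd G Z v := by
  rw [par, dif_pos h]; exact h.choose_spec

lemma exists_desc (hG : G.Connected) (hZ : Z.Nonempty) {v : α} (h : dd G Z v ≠ 0) :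
    ∃ u, G.Adj v u ∧ dd G Z u < dd G Z v := by
  obtain ⟨z, hz, hd⟩ := dd_exists G Z hZ v
  have hdz : G.dist v z ≠ 0 := by rw [hd]; exact h
  obtain ⟨p, hp⟩ := exists_walk_of_dist_ne_zero hdz
  cases p with
  | nil => exact absurd SimpleGraph.dist_self hdz
  | @cons _ u _ hadj q =>
    refine ⟨u, hadj, ?_⟩
    have h1 : dd G Z u ≤ G.dist u z := dd_le G Z hz u
    have h2 : G.dist u z ≤ q.length := SimpleGraph.dist_le q
    simp only [Walk.length_cons] at hp
    omega

noncomputable def rt (v : α) : α :=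
  if h : ∃ u, G.Adj v u ∧ dd G Z u < dd G Z v then rt (par G Z v) else v
termination_by dd G Z v
decreasing_by exact (par_spec G Z h).2

noncomputable def FF : SimpleGraph α :=
  SimpleGraph.fromRel fun x y => (∃ u, G.Adj x u ∧ dd G Z u < dd G Z x) ∧ y = par G Z x

lemma FF_le : FF G Z ≤ G := by
  intro x y hxy
  rw [FF, fromRel_adj] at hxy
  obtain ⟨hne, h | h⟩ := hxy
  · exact h.2 ▸ (par_spec G Z h.1).1
  · exact (h.2 ▸ (par_spec G Z h.1).1).symm

lemma adj_cases {x y : α} (h : (FF G Z).Adj x y) :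
    (y = par G Z x ∧ dd G Z y < dd G Z x) ∨ (x = par G Z y ∧ dd G Z x < dd G Z y) := by
  rw [FF, fromRel_adj] at h
  obtain ⟨hne, h | h⟩ := h
  · exact Or.inl ⟨h.2, h.2 ▸ (par_spec G Z h.1).2⟩
  · exact Or.inr ⟨h.2, h.2 ▸ (par_spec G Z h.1).2⟩

lemma adj_par {v : α} (h : ∃ u, G.Adj v u ∧ dd G Z u < dd G Z v) :
    (FF G Z).Adj v (par G Z v) := by
  rw [FF, fromRel_adj]
  refine ⟨fun he => ?_, Or.inl ⟨h, rfl⟩⟩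
  have := (par_spec G Z h).2
  rw [← he] at this; omega

lemma rt_spec (hG : G.Connected) (hZ : Z.Nonempty) (v : α) :
    rt G Z v ∈ Z ∧ (FF G Z).Reachable v (rt G Z v) ∧ G.dist v (rt G Z v) ≤ dd G Z v := by
  generalize hn : dd G Z v = n
  induction n using Nat.strong_induction_on generalizing v with
  | _ n ih =>
    by_cases h : ∃ u, G.Adj v u ∧ dd G Z u < dd G Z v
    · have hrt : rt G Z v = rt G Z (par G Z v) := by rw [rt, dif_pos h]
      obtain ⟨hadj, hlt⟩ := par_spec G Z h
      obtain ⟨h1, h2, h3⟩ := ih (dd G Z (par G Z v)) (hn ▸ hlt) (par G Z v) rfl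
      refine ⟨hrt ▸ h1, ?_, ?_⟩
      · rw [hrt]; exact (adj_par G Z h).reachable.trans h2
      · rw [hrt]
        have htri : G.dist v (rt G Z (par G Z v)) ≤
            G.dist v (par G Z v) + G.dist (par G Z v) (rt G Z (par G Z v)) := hG.dist_triangle
        have hone : G.dist v (par G Z v) ≤ 1 := by
          simpa using SimpleGraph.dist_le (Walk.cons hadj Walk.nil)
        omega
    · have hrt : rt G Z v = v := by rw [rt, dif_neg h]
      have hv : v ∈ Z := by
        by_contra hv
        have hdd : dd G Z v ≠ 0 := by
          intro h0
          obtain ⟨z, hz, hd⟩ := dd_exists G Z hZ v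
          rw [h0] at hd
          rw [hG.dist_eq_zero_iff.mp hd] at hv
          exact hv hz
        exact h (exists_desc G Z hG hZ hdd)
      rw [hrt]
      exact ⟨hv, Reachable.refl _, by simp [SimpleGraph.dist_self]⟩


lemma rt_adj {x y : α} (h : (FF G Z).Adj x y) : rt G Z x = rt G Z y := by
  rcases adj_cases G Z h with ⟨hp, hlt⟩ | ⟨hp, hlt⟩
  · have hex : ∃ u, G.Adj x u ∧ dd G Z u < dd G Z x :=
      ⟨y, FF_le G Z h, hlt⟩
    rw [rt, dif_pos hex, ← hp]
  · have hex : ∃ u, G.Adj y u ∧ dd G Z u < dd G Z y :=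
      ⟨x, FF_le G Z h.symm, hlt⟩
    rw [show rt G Z y = rt G Z (par G Z y) from by rw [rt, dif_pos hex]]
    rw [← hp]

lemma rt_reachable {x y : α} (h : (FF G Z).Reachable x y) : rt G Z x = rt G Z y := by
  obtain ⟨p⟩ := h
  induction p with
  | nil => rfl
  | cons hadj q ih => exact (rt_adj G Z hadj).trans ih

lemma rt_fix {z : α} (hz : z ∈ Z) : rt G Z z = z := by
  have : ¬ ∃ u, G.Adj z u ∧ dd G Z u < dd G Z z := by
    rintro ⟨u, -, hu⟩
    rw [dd_zero_of_mem G Z hz] at hu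
    omega
  rw [rt, dif_neg this]

lemma support_getElem {u v : α} (p : G.Walk u v) :
    ∀ (i : ℕ) (h : i < p.support.length), p.support[i] = p.getVert i := by
  induction p with
  | nil =>
    intro i h
    simp only [Walk.support_nil, List.length_cons, List.length_nil] at h
    interval_cases i
    · simp [Walk.getVert_zero]
  | cons hadj q ih =>
    intro i h
    match i with
    | 0 => simp [Walk.getVert_zero]
    | (j+1) =>
      simp only [Walk.support_cons, List.getElem_cons_succ]
      rw [ih j (by simpa [Walk.support_cons] using h)]
      rfl

lemma FF_acyclic (hG : G.Connected) (hZ : Z.Nonempty) : (FF G Z).IsAcyclic := by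
  intro a c hc
  have hne : c.support ≠ [] := c.support_ne_nil
  obtain ⟨M, hM⟩ : ∃ M, M ∈ List.argmax (dd G Z) c.support := by
    cases hargmax : List.argmax (dd G Z) c.support with
    | none => exact absurd (List.argmax_eq_none.mp hargmax) hne
    | some M => exact ⟨M, by simp [Option.mem_def, hargmax]⟩
  have hMmem : M ∈ c.support := List.argmax_mem hM
  have hmax : ∀ x ∈ c.support, dd G Z x ≤ dd G Z M := fun x hx => List.le_of_mem_argmax hx hM
  set c' := c.rotate M hMmem with hc'def
  have hc' : c'.IsCycle := hc.rotate hMmem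
  have h3 : 3 ≤ c'.length := hc'.three_le_length
  have hmax' : ∀ x ∈ c'.support, dd G Z x ≤ dd G Z M := by
    intro x hx
    rw [c'.support_eq_cons] at hx
    rcases List.mem_cons.mp hx with rfl | hx
    · exact le_refl _
    · have := (Walk.support_rotate c M hMmem).mem_iff.mp hx
      exact hmax x (List.mem_of_mem_tail this)
  set n := c'.length with hn
  have hu : (FF G Z).Adj M (c'.getVert 1) := by
    have := c'.adj_getVert_succ (i := 0) (by omega)
    simpa [Walk.getVert_zero] using this
  have hw : (FF G Z).Adj (c'.getVert (n-1)) M := by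
    have := c'.adj_getVert_succ (i := n-1) (by omega)
    have heq : n - 1 + 1 = n := by omega
    rw [heq] at this
    have hvn : c'.getVert n = M := by rw [hn]; exact c'.getVert_length
    rwa [hvn] at this
  have humem : c'.getVert 1 ∈ c'.support :=
    Walk.mem_support_iff_exists_getVert.mpr ⟨1, rfl, by omega⟩
  have hwmem : c'.getVert (n-1) ∈ c'.support :=
    Walk.mem_support_iff_exists_getVert.mpr ⟨n-1, rfl, by omega⟩
  have hupar : c'.getVert 1 = par G Z M := by
    rcases adj_cases G Z hu with ⟨hp, _⟩ | ⟨_, hlt⟩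
    · exact hp
    · exact absurd (hmax' _ humem) (by omega)
  have hwpar : c'.getVert (n-1) = par G Z M := by
    rcases adj_cases G Z hw with ⟨_, hlt⟩ | ⟨hp, _⟩
    · exact absurd (hmax' _ hwmem) (by omega)
    · exact hp
  -- now getVert 1 = getVert (n-1), contradict nodup of support.tail
  have hlen : c'.support.length = n + 1 := by rw [Walk.length_support]
  have htlen : c'.support.tail.length = n := by simp [hlen]
  have h0 : c'.support.tail[0]'(by omega) = c'.getVert 1 := by
    rw [List.getElem_tail, support_getElem]
  have h1 : c'.support.tail[n-2]'(by omega) = c'.getVert (n-1) := by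
    rw [List.getElem_tail, support_getElem]
    · congr 1
      omega
  have hnodup := hc'.support_nodup
  have heq : c'.support.tail[0]'(by omega) = c'.support.tail[n-2]'(by omega) := by
    rw [h0, h1, hupar, hwpar]
  have : (0 : ℕ) = n - 2 := hnodup.getElem_inj_iff.mp heq
  omega

end Stmt15Aux

open Stmt15Aux in
/-- Breadth-first spanning forest rooted at a set `Z`: if `G` is connected and every
vertex of `G` is within distance `B` of the nonempty set `Z`, then there is a spanning
forest `F ≤ G` (an acyclic subgraph on all of `V(G)`) such that every component of `F`
contains exactly one vertex of `Z`, and every vertex is within distance `B` in `G` of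
the unique `Z`-vertex of its component. -/
theorem stmt15 {α : Type*} (G : SimpleGraph α) (hG : G.Connected)
    (Z : Set α) (hZ : Z.Nonempty) (B : ℕ)
    (hB : ∀ v : α, ∃ z ∈ Z, G.dist v z ≤ B) :
    ∃ F : SimpleGraph α, F ≤ G ∧ F.IsAcyclic ∧
      (∀ v : α, ∃! z : α, z ∈ Z ∧ F.Reachable v z) ∧
      ∀ v z : α, z ∈ Z → F.Reachable v z → G.dist v z ≤ B := by
  refine ⟨FF G Z, FF_le G Z, FF_acyclic G Z hG hZ, ?_, ?_⟩
  · intro v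
    obtain ⟨h1, h2, h3⟩ := rt_spec G Z hG hZ v
    refine ⟨rt G Z v, ⟨h1, h2⟩, ?_⟩
    rintro y ⟨hy, hry⟩
    have := rt_reachable G Z hry
    rw [rt_fix G Z hy] at this
    rw [← this]
  · intro v z hz hr
    have hzeq : z = rt G Z v := by
      have := rt_reachable G Z hr
      rw [rt_fix G Z hz] at this
      exact this.symm
    obtain ⟨h1, h2, h3⟩ := rt_spec G Z hG hZ v
    obtain ⟨z0, hz0, hdist0⟩ := hB v
    have : dd G Z v ≤ B := le_trans (dd_le G Z hz0 v) hdist0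
    rw [hzeq]
    omega
end

section
/- K₇ is not a 3-fat minor of any graph G that admits a tree-decomposition (T, 𝒱) of adhesion at most 5 such that every bag, after removing a set of at most 3 vertices of pairwise distance at most 2 in G, contains at most 6 vertices lying in distinct parts. More specifically, as in the paper: if a graph G admits a 3-fat model (𝒰,ℰ) of K₇ and a tree-decomposition of adhesion 5, then some bag of the tree-decomposition intersects all seven branch sets of the model. -/
open SimpleGraph


section TreeDecompAux

variable {τ : Type*} {β : Type*}

/-- Crossing lemma for walks: a walk from inside `P` to outside `P` contains an
edge leaving `P`. -/
private lemma walk_cross {H : SimpleGraph τ} {P : Set τ} :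
    ∀ {a b : τ} (p : H.Walk a b), a ∈ P → b ∉ P →
    ∃ u v, H.Adj u v ∧ u ∈ P ∧ v ∉ P ∧ u ∈ p.support ∧ v ∈ p.support := by
  intro a b p
  induction p with
  | nil => intro ha hb; exact absurd ha hb
  | @cons a c b h q ih =>
    intro ha hb
    by_cases hc : c ∈ P
    · obtain ⟨u, v, h1, h2, h3, h4, h5⟩ := ih hc hb
      exact ⟨u, v, h1, h2, h3, by simp [h4], by simp [h5]⟩
    · exact ⟨a, c, h, ha, hc, by simp, by simp⟩

/-- Reachability in an induced subgraph gives a walk in the ambient graph whose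
support stays in the set. -/
private lemma induce_walk {G : SimpleGraph β} {s : Set β} {a b : β}
    (ha : a ∈ s) (hb : b ∈ s) (h : (G.induce s).Reachable ⟨a, ha⟩ ⟨b, hb⟩) :
    ∃ p : G.Walk a b, ∀ v ∈ p.support, v ∈ s := by
  obtain ⟨w⟩ := h
  let f : G.induce s →g G := ⟨Subtype.val, fun {u v} h => h⟩
  refine ⟨w.map f, ?_⟩
  intro v hv
  rw [Walk.support_map, List.mem_map] at hv
  obtain ⟨u, _, rfl⟩ := hv
  exact u.2

/-- The side of `s` for the tree edge `st`: nodes reachable from `s` after deleting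
the edge. -/
private def Tside (T : SimpleGraph τ) (s t : τ) : Set τ :=
  {r | (T.deleteEdges {s(s, t)}).Reachable s r}

private lemma Tside_self (T : SimpleGraph τ) (s t : τ) : s ∈ Tside T s t :=
  Reachable.refl s

private lemma Tside_cover {T : SimpleGraph τ} (hT : T.Preconnected) (s t r : τ) :
    r ∈ Tside T s t ∨ r ∈ Tside T t s := by
  have key : ∀ {u r : τ} (_ : T.Walk u r),
      (u ∈ Tside T s t ∨ u ∈ Tside T t s) → (r ∈ Tside T s t ∨ r ∈ Tside T t s) := by
    intro u r w
    induction w with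
    | nil => exact id
    | @cons u c r h q ih =>
      intro hu
      apply ih
      by_cases he : s(u, c) = s(s, t)
      · rw [Sym2.eq_iff] at he
        rcases he with ⟨rfl, rfl⟩ | ⟨rfl, rfl⟩
        · exact Or.inr (Reachable.refl _)
        · exact Or.inl (Reachable.refl _)
      · rcases hu with hu | hu
        · exact Or.inl (hu.trans ((deleteEdges_adj.2 ⟨h, he⟩).reachable))
        · refine Or.inr (hu.trans ((deleteEdges_adj.2 ⟨h, ?_⟩).reachable))
          simp only [Set.mem_singleton_iff]
          rw [Sym2.eq_swap (a := t)]
          exact he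
  obtain ⟨w⟩ := hT s r
  exact key w (Or.inl (Tside_self T s t))

private lemma Tside_disj {T : SimpleGraph τ} (htree : T.IsTree) {s t : τ} (hst : T.Adj s t)
    {r : τ} (h1 : r ∈ Tside T s t) (h2 : r ∈ Tside T t s) : False := by
  have hb := isAcyclic_iff_forall_adj_isBridge.1 htree.IsAcyclic hst
  rw [isBridge_iff] at hb
  apply hb
  have h2' : (T.deleteEdges {s(s, t)}).Reachable t r := by
    have : ({s(s, t)} : Set (Sym2 τ)) = {s(t, s)} := by rw [Sym2.eq_swap]
    rw [this]; exact h2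
  exact h1.trans h2'.symm

/-- A vertex appearing in bags on both sides of a tree edge lies in the adhesion set. -/
private lemma adh_of_cross {T : SimpleGraph τ} {V : τ → Set β} (htree : T.IsTree)
    (hbags : ∀ v : β, (T.induce {t | v ∈ V t}).Connected)
    {s t : τ} (hst : T.Adj s t) {v : β} {r r' : τ}
    (hr : r ∈ Tside T s t) (hr' : r' ∈ Tside T t s)
    (hvr : v ∈ V r) (hvr' : v ∈ V r') : v ∈ V s ∧ v ∈ V t := by
  have hreach : (T.induce {q | v ∈ V q}).Reachable ⟨r, hvr⟩ ⟨r', hvr'⟩ :=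
    (hbags v).preconnected _ _
  obtain ⟨w, hw⟩ := induce_walk (G := T) (s := {q | v ∈ V q}) (a := r) (b := r')
    hvr hvr' hreach
  obtain ⟨q, q', hqq', hq, hq', hqs, hq's⟩ :=
    walk_cross (P := Tside T s t) w hr (fun h => Tside_disj htree hst h hr')
  have he : s(q, q') = s(s, t) := by
    by_contra he
    exact hq' (hq.trans ((deleteEdges_adj.2 ⟨hqq', he⟩).reachable))
  rw [Sym2.eq_iff] at he
  rcases he with ⟨rfl, rfl⟩ | ⟨rfl, rfl⟩
  · exact ⟨hw _ hqs, hw _ hq's⟩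
  · exact ⟨hw _ hq's, hw _ hqs⟩

/-- The union of the bags on the `s`-side of the tree edge `st`. -/
private def Bagside (T : SimpleGraph τ) (V : τ → Set β) (s t : τ) : Set β :=
  ⋃ r ∈ Tside T s t, V r

private lemma mem_Bagside {T : SimpleGraph τ} {V : τ → Set β} {s t : τ} {v : β} :
    v ∈ Bagside T V s t ↔ ∃ r ∈ Tside T s t, v ∈ V r := by
  simp [Bagside]

end TreeDecompAux


/-- If a finite graph `G` has a `3`-fat model of `K₇` and a tree-decomposition `(T, 𝒱)`
of adhesion at most `5`, then some bag of the tree-decomposition intersects all seven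
branch sets of the model. (The hypotheses state that `T` is a tree, that for each vertex
of `G` the set of bags containing it induces a connected — in particular nonempty —
subgraph of `T`, that both endvertices of each edge of `G` lie in a common bag, and that
each adhesion set `V s ∩ V t`, for `st ∈ E(T)`, has at most `5` vertices.) -/
theorem stmt16 {β τ : Type*} [Fintype β] [Fintype τ]
    (G : SimpleGraph β) (T : SimpleGraph τ) (V : τ → Set β)
    (htree : T.IsTree)
    (hbags : ∀ v : β, (T.induce {t | v ∈ V t}).Connected)
    (hedges : ∀ ⦃u v : β⦄, G.Adj u v → ∃ t, u ∈ V t ∧ v ∈ V t)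
    (hadh : ∀ ⦃s t : τ⦄, T.Adj s t → (V s ∩ V t).ncard ≤ 5)
    (M : FatModel (completeGraph (Fin 7)) G 3) :
    ∃ t : τ, ∀ x : Fin 7, (V t ∩ M.U x).Nonempty := by
  classical
  have hpre : T.Preconnected := htree.isConnected.preconnected
  have hadj7 : ∀ {a b : Fin 7}, a ≠ b → (completeGraph (Fin 7)).Adj a b := fun h => h
  have hbag : ∀ v : β, ∃ r, v ∈ V r := by
    intro v
    obtain ⟨⟨r, hr⟩⟩ := (hbags v).nonempty
    exact ⟨r, hr⟩
  have hcover : ∀ (s t : τ) (v : β), v ∈ Bagside T V s t ∨ v ∈ Bagside T V t s := by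
    intro s t v
    obtain ⟨r, hr⟩ := hbag v
    rcases Tside_cover hpre s t r with h | h
    · exact Or.inl (mem_Bagside.2 ⟨r, h, hr⟩)
    · exact Or.inr (mem_Bagside.2 ⟨r, h, hr⟩)
  have hcrossG : ∀ {s t : τ}, T.Adj s t → ∀ {a b : β} (p : G.Walk a b),
      a ∉ Bagside T V s t → b ∈ Bagside T V s t →
      ∃ v ∈ p.support, v ∈ V s ∧ v ∈ V t := by
    intro s t hst a b p ha hb
    obtain ⟨u, v, huv, hu, hv, hus, hvs⟩ :=
      walk_cross (P := (Bagside T V s t)ᶜ) p ha (fun h => h hb)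
    have hvA : v ∈ Bagside T V s t := not_not.1 hv
    obtain ⟨r, hur, hvr⟩ := hedges huv
    have hrside : r ∈ Tside T t s := by
      rcases Tside_cover hpre s t r with h | h
      · exact absurd (mem_Bagside.2 ⟨r, h, hur⟩) hu
      · exact h
    obtain ⟨r', hr'side, hvr'⟩ := mem_Bagside.1 hvA
    exact ⟨v, hvs, adh_of_cross htree hbags hst hr'side hrside hvr' hvr⟩
  -- the key orientation claim
  have key : ∀ {s t : τ}, T.Adj s t →
      (∀ x, (Bagside T V s t ∩ M.U x).Nonempty) ∨
      (∀ x, (Bagside T V t s ∩ M.U x).Nonempty) := by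
    intro s t hst
    by_contra hcon
    rw [not_or] at hcon
    obtain ⟨hA, hB⟩ := hcon
    obtain ⟨x, hx⟩ := not_forall.1 hA
    obtain ⟨y, hy⟩ := not_forall.1 hB
    have hxA : ∀ v ∈ M.U x, v ∉ Bagside T V s t := fun v hv hA' => hx ⟨v, hA', hv⟩
    have hyB : ∀ v ∈ M.U y, v ∉ Bagside T V t s := fun v hv hB' => hy ⟨v, hB', hv⟩
    have hST : ∀ v : β, v ∈ V s ∧ v ∈ V t → v ∉ M.U x ∧ v ∉ M.U y := by
      intro v hv
      constructor
      · intro hvx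
        exact hxA v hvx (mem_Bagside.2 ⟨s, Tside_self T s t, hv.1⟩)
      · intro hvy
        exact hyB v hvy (mem_Bagside.2 ⟨t, Tside_self T t s, hv.2⟩)
    have hxy : x ≠ y := by
      rintro rfl
      obtain ⟨⟨u, hu⟩⟩ := (M.conn x).nonempty
      rcases hcover s t u with h | h
      · exact hxA u hu h
      · exact hyB u hu h
    obtain ⟨a0, b0, p0, _, ha0, hb0, hE0, _, _⟩ := M.path (hadj7 hxy)
    have ha0A : a0 ∉ Bagside T V s t := hxA a0 ha0
    have hb0A : b0 ∈ Bagside T V s t := (hcover s t b0).resolve_right (hyB b0 hb0)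
    obtain ⟨v0, hv0s, hv0S⟩ := hcrossG hst p0 ha0A hb0A
    have hv0E : v0 ∈ M.E x y := by rw [hE0]; exact hv0s
    -- crossing vertices for the other five branch sets
    have hgz : ∀ z : Fin 7, ∃ v : β, z ≠ x → z ≠ y →
        (v ∈ V s ∧ v ∈ V t) ∧ (v ∈ M.E x z ∨ v ∈ M.U z ∨ v ∈ M.E y z) := by
      intro z
      by_cases hzx : z = x
      · exact ⟨v0, fun h _ => absurd hzx h⟩
      by_cases hzy : z = y
      · exact ⟨v0, fun _ h => absurd hzy h⟩
      obtain ⟨a1, b1, p1, _, ha1, hb1, hE1, _, _⟩ := M.path (hadj7 (Ne.symm hzx))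
      obtain ⟨a2, b2, p2, _, ha2, hb2, hE2, _, _⟩ := M.path (hadj7 (Ne.symm hzy))
      obtain ⟨q, hq⟩ := induce_walk (G := G) (s := M.U z) (a := b1) (b := b2) hb1 hb2
        ((M.conn z).preconnected _ _)
      have haw : a1 ∉ Bagside T V s t := hxA a1 ha1
      have hbw : a2 ∈ Bagside T V s t := (hcover s t a2).resolve_right (hyB a2 ha2)
      obtain ⟨v, hvsup, hvS⟩ := hcrossG hst (p1.append (q.append p2.reverse)) haw hbw
      refine ⟨v, fun _ _ => ⟨hvS, ?_⟩⟩
      rw [Walk.mem_support_append_iff, Walk.mem_support_append_iff] at hvsup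
      rcases hvsup with h | h | h
      · exact Or.inl (by rw [hE1]; exact h)
      · exact Or.inr (Or.inl (hq v h))
      · refine Or.inr (Or.inr ?_)
        rw [hE2]
        rw [Walk.support_reverse, List.mem_reverse] at h
        exact h
    choose g hg using hgz
    -- disjointness helpers
    have hsym : ∀ {a b c d : Fin 7}, (a = c → b ≠ d) → (a = d → b ≠ c) →
        s(a, b) ≠ s(c, d) := by
      intro a b c d h1 h2 hcon'
      rw [Sym2.eq_iff] at hcon'
      rcases hcon' with ⟨e1, e2⟩ | ⟨e1, e2⟩
      · exact h1 e1 e2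
      · exact h2 e1 e2
    have hEE : ∀ {a c a' c' : Fin 7} {v : β}, a ≠ c → a' ≠ c' → s(a, c) ≠ s(a', c') →
        c ≠ c' → v ∉ M.U a → v ∉ M.U a' → v ∈ M.E a c → v ∈ M.E a' c' → False := by
      intro a c a' c' v h1 h2 h3 h4 h5 h6 h7 h8
      obtain ⟨hl, hr⟩ := M.paths_int_disj (hadj7 h1) (hadj7 h2) h3 v h7 h8
      rcases hl with hl | hl
      · exact h5 hl
      rcases hr with hr | hr
      · exact h6 hr
      exact Set.disjoint_left.1 (M.disj c c' h4) hl hr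
    have hEU : ∀ {a c z : Fin 7} {v : β}, a ≠ c → z ≠ a → z ≠ c →
        v ∈ M.E a c → v ∈ M.U z → False := fun h1 h2 h3 h4 h5 =>
      Set.disjoint_left.1 (M.path_disj (hadj7 h1) _ h2 h3) h4 h5
    have hdisj1 : ∀ z : Fin 7, z ≠ x → z ≠ y → v0 ≠ g z := by
      intro z hzx hzy heq
      obtain ⟨hzS, hztrip⟩ := hg z hzx hzy
      obtain ⟨hv0x, hv0y⟩ := hST v0 hv0S
      rw [← heq] at hztrip
      rcases hztrip with h | h | h
      · exact hEE hxy (Ne.symm hzx)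
          (hsym (fun _ => Ne.symm hzy) (fun hxz => (hzx hxz.symm).elim))
          (Ne.symm hzy) hv0x hv0x hv0E h
      · exact hEU hxy hzx hzy hv0E h
      · exact hEE hxy (Ne.symm hzy)
          (hsym (fun hxy' => (hxy hxy').elim) (fun hxz => (hzx hxz.symm).elim))
          (Ne.symm hzy) hv0x hv0y hv0E h
    have hdisj2 : ∀ z z' : Fin 7, z ≠ x → z ≠ y → z' ≠ x → z' ≠ y → z ≠ z' →
        g z ≠ g z' := by
      intro z z' hzx hzy hz'x hz'y hzz' heq
      obtain ⟨hzS, hztrip⟩ := hg z hzx hzy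
      obtain ⟨hz'S, hz'trip⟩ := hg z' hz'x hz'y
      obtain ⟨hvx, hvy⟩ := hST (g z) hzS
      rw [← heq] at hz'trip
      rcases hztrip with h | h | h <;> rcases hz'trip with h' | h' | h'
      · exact hEE (Ne.symm hzx) (Ne.symm hz'x)
          (hsym (fun _ => hzz') (fun hxz' => (hz'x hxz'.symm).elim)) hzz' hvx hvx h h'
      · exact hEU (Ne.symm hzx) hz'x (Ne.symm hzz') h h'
      · exact hEE (Ne.symm hzx) (Ne.symm hz'y)
          (hsym (fun hxy' => (hxy hxy').elim) (fun hxz' => (hz'x hxz'.symm).elim))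
          hzz' hvx hvy h h'
      · exact hEU (Ne.symm hz'x) hzx hzz' h' h
      · exact Set.disjoint_left.1 (M.disj z z' hzz') h h'
      · exact hEU (Ne.symm hz'y) hzy hzz' h' h
      · exact hEE (Ne.symm hzy) (Ne.symm hz'x)
          (hsym (fun hyx => (hxy hyx.symm).elim) (fun hyz' => (hz'y hyz'.symm).elim))
          hzz' hvy hvx h h'
      · exact hEU (Ne.symm hzy) hz'y (Ne.symm hzz') h h'
      · exact hEE (Ne.symm hzy) (Ne.symm hz'y)
          (hsym (fun _ => hzz') (fun hyz' => (hz'y hyz'.symm).elim)) hzz' hvy hvy h h'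
    -- cardinality contradiction
    have hcard : (Finset.univ.erase y).card ≤ (V s ∩ V t).toFinset.card := by
      apply Finset.card_le_card_of_injOn (fun z => if z = x then v0 else g z)
      · intro z hz
        have hz' : z ≠ y := (Finset.mem_erase.1 hz).1
        by_cases hzx : z = x
        · beta_reduce; rw [Finset.mem_coe, if_pos hzx, Set.mem_toFinset]
          exact ⟨hv0S.1, hv0S.2⟩
        · beta_reduce; rw [Finset.mem_coe, if_neg hzx, Set.mem_toFinset]
          exact ⟨((hg z hzx hz').1).1, ((hg z hzx hz').1).2⟩
      · intro z hz z' hz' heq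
        simp only [Finset.coe_erase, Set.mem_diff, Finset.coe_univ, Set.mem_univ,
          Set.mem_singleton_iff, true_and] at hz hz'
        by_contra hne
        simp only at heq
        by_cases h1 : z = x <;> by_cases h2 : z' = x
        · exact hne (h1.trans h2.symm)
        · rw [if_pos h1, if_neg h2] at heq
          exact hdisj1 z' h2 hz' heq
        · rw [if_neg h1, if_pos h2] at heq
          exact hdisj1 z h1 hz heq.symm
        · rw [if_neg h1, if_neg h2] at heq
          exact hdisj2 z z' h1 hz h2 hz' hne heq
    have h6 : (Finset.univ.erase y).card = 6 := by
      rw [Finset.card_erase_of_mem (Finset.mem_univ y)]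
      simp
    have h5' : (V s ∩ V t).toFinset.card ≤ 5 := by
      rw [← Set.ncard_eq_toFinset_card']
      exact hadh hst
    omega
  -- choose an orientation of each tree edge
  have hpick : ∀ e : Sym2 τ, ∃ z w : τ, e = s(z, w) ∧
      (e ∈ T.edgeSet → ∀ x, (Bagside T V z w ∩ M.U x).Nonempty) := by
    intro e
    refine Sym2.inductionOn e ?_
    intro z w
    by_cases he : s(z, w) ∈ T.edgeSet
    · have hzw : T.Adj z w := T.mem_edgeSet.1 he
      rcases key hzw with h | h
      · exact ⟨z, w, rfl, fun _ => h⟩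
      · exact ⟨w, z, Sym2.eq_swap, fun _ => h⟩
    · exact ⟨z, w, rfl, fun h => absurd h he⟩
  choose hd tl hpe hpg using hpick
  -- find a sink
  have hsink : ∃ t0 : τ, ∀ e ∈ T.edgeSet, t0 ∈ e → hd e = t0 := by
    by_contra hcon
    push_neg at hcon
    choose F hF1 hF2 hF3 using hcon
    have hinj : Set.InjOn F ↑(Finset.univ : Finset τ) := by
      intro t1 _ t2 _ heq
      have h1 : t1 ∈ F t2 := heq ▸ hF2 t1
      have h2 : t2 ∈ F t2 := hF2 t2
      have e3 : hd (F t2) ≠ t1 := heq ▸ hF3 t1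
      have e4 : hd (F t2) ≠ t2 := hF3 t2
      rw [hpe (F t2), Sym2.mem_iff] at h1 h2
      rcases h1 with h1 | h1
      · exact absurd h1.symm e3
      rcases h2 with h2 | h2
      · exact absurd h2.symm e4
      exact h1.trans h2.symm
    have hle : Fintype.card τ ≤ T.edgeFinset.card := by
      have := Finset.card_le_card_of_injOn F
        (fun t _ => mem_edgeFinset.2 (hF1 t)) hinj
      simpa using this
    have hc := htree.card_edgeFinset
    have hne : 0 < Fintype.card τ := Fintype.card_pos_iff.2 htree.isConnected.nonempty
    omega
  obtain ⟨t0, ht0⟩ := hsink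
  refine ⟨t0, fun x => ?_⟩
  by_contra hcon
  have hVt0 : ∀ v ∈ M.U x, v ∉ V t0 := fun v hv hvt => hcon ⟨v, hvt, hv⟩
  obtain ⟨⟨u0, hu0⟩⟩ := (M.conn x).nonempty
  obtain ⟨⟨r0, hr0⟩⟩ := (hbags u0).nonempty
  have hr0t0 : r0 ≠ t0 := fun h => hVt0 u0 hu0 (h ▸ hr0)
  obtain ⟨w0⟩ := hpre t0 r0
  obtain ⟨p, hp⟩ := w0.toPath
  cases p with
  | nil => exact hr0t0 rfl
  | @cons _ s1 _ hadjaux q =>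
    rw [Walk.cons_isPath_iff] at hp
    have hqe : ∀ e ∈ q.edges, e ∈ (T.deleteEdges {s(s1, t0)}).edgeSet := by
      intro e he
      rw [edgeSet_deleteEdges]
      refine ⟨q.edges_subset_edgeSet he, ?_⟩
      simp only [Set.mem_singleton_iff]
      rintro rfl
      exact hp.2 (q.snd_mem_support_of_mem_edges he)
    have hr0side : r0 ∈ Tside T s1 t0 := ⟨q.transfer _ hqe⟩
    have he : s(t0, s1) ∈ T.edgeSet := T.mem_edgeSet.2 hadjaux
    have hhd : hd s(t0, s1) = t0 := ht0 _ he (Sym2.mem_mk_left _ _)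
    have hpeE := hpe s(t0, s1)
    rw [hhd] at hpeE
    have htl : tl s(t0, s1) = s1 := by
      rcases Sym2.eq_iff.1 hpeE with ⟨-, h⟩ | ⟨-, h2⟩
      · exact h.symm
      · exact absurd h2.symm hadjaux.ne
    have hall := hpg s(t0, s1) he
    rw [hhd, htl] at hall
    obtain ⟨v1, hv1A, hv1U⟩ := hall x
    have hu0A : u0 ∉ Bagside T V t0 s1 := by
      intro hu0A
      obtain ⟨r', hr'side, hu0r'⟩ := mem_Bagside.1 hu0A
      exact hVt0 u0 hu0 (adh_of_cross htree hbags hadjaux hr'side hr0side hu0r' hr0).1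
    obtain ⟨pw, hpw⟩ := induce_walk (G := G) (s := M.U x) (a := u0) (b := v1) hu0 hv1U
      ((M.conn x).preconnected _ _)
    obtain ⟨v2, hv2sup, hv2S⟩ := hcrossG hadjaux pw hu0A hv1A
    exact hVt0 v2 (hpw v2 hv2sup) hv2S.1
end
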